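/- arXiv:1408.6723 — 3 statements merged into one kernel-verified Lean document; each statement's English description precedes it below -/
import Mathlib

section
/- For a symmetric positive definite matrix Q and a symmetric positive semidefinite matrix Σ of the same size, tr(QΣ) ≥ (tr(Q⁻¹))⁻¹ · tr(Σ). -/
open Matrix

lemma psd_diag_nonneg {n : ℕ} {M : Matrix (Fin n) (Fin n) ℝ} (hM : M.PosSemidef)
    (i : Fin n) : 0 ≤ M i i := by
  exact hM.diag_nonneg

theorem stmt_7 {n : ℕ}
    (Q Sg : Matrix (Fin n) (Fin n) ℝ)
    (hQ : Q.PosDef) (hSg : Sg.PosSemidef) :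
    ((Q⁻¹).trace)⁻¹ * Sg.trace ≤ (Q * Sg).trace := by
  rcases Nat.eq_zero_or_pos n with hn | hn
  · subst hn
    simp [Matrix.trace]
  haveI : Nonempty (Fin n) := Fin.pos_iff_nonempty.mp hn
  have hH := hQ.isHermitian
  set U : Matrix (Fin n) (Fin n) ℝ := (hH.eigenvectorUnitary : Matrix (Fin n) (Fin n) ℝ) with hU
  have hUU : U * star U = 1 := (Matrix.mem_unitaryGroup_iff).mp hH.eigenvectorUnitary.2
  have hUU' : star U * U = 1 := (Matrix.mem_unitaryGroup_iff').mp hH.eigenvectorUnitary.2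
  set μ : Fin n → ℝ := hH.eigenvalues with hμ
  have hμpos : ∀ i, 0 < μ i := hQ.eigenvalues_pos
  have hspec : Q = U * diagonal μ * star U := by
    have := hH.spectral_theorem
    simpa [RCLike.ofReal_real_eq_id] using this
  set B : Matrix (Fin n) (Fin n) ℝ := star U * Sg * U with hB
  have hBpsd : B.PosSemidef := by
    have := hSg.conjTranspose_mul_mul_same U
    simpa [hB, Matrix.star_eq_conjTranspose] using this
  -- trace identities
  have htrS : Sg.trace = B.trace := by
    rw [hB, Matrix.trace_mul_cycle, hUU, Matrix.one_mul]
  have htrQS : (Q * Sg).trace = ∑ i, μ i * B i i := by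
    have : Q * Sg = U * (diagonal μ * B) * star U := by
      rw [hspec, hB]
      simp only [Matrix.mul_assoc, hUU, Matrix.mul_one]
    rw [this, Matrix.trace_mul_cycle, hUU', Matrix.one_mul]
    simp [Matrix.trace, Matrix.diag, Matrix.diagonal_mul]
  have hQinv : Q⁻¹ = U * diagonal (fun i => (μ i)⁻¹) * star U := by
    apply Matrix.inv_eq_right_inv
    rw [hspec]
    have hdd : diagonal μ * diagonal (fun i => (μ i)⁻¹) = 1 := by
      rw [Matrix.diagonal_mul_diagonal]
      convert Matrix.diagonal_one with i
      exact mul_inv_cancel₀ (hμpos i).ne'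
    calc U * diagonal μ * star U * (U * diagonal (fun i => (μ i)⁻¹) * star U)
        = U * (diagonal μ * ((star U * U) * (diagonal (fun i => (μ i)⁻¹) * star U))) := by
          simp only [Matrix.mul_assoc]
      _ = 1 := by
          rw [hUU', Matrix.one_mul]
          have key : diagonal μ * ((diagonal fun i => (μ i)⁻¹) * star U) = star U := by
            rw [← Matrix.mul_assoc, hdd, Matrix.one_mul]
          rw [key, hUU]
  have htrQinv : (Q⁻¹).trace = ∑ i, (μ i)⁻¹ := by
    rw [hQinv, Matrix.trace_mul_cycle, hUU', Matrix.one_mul, Matrix.trace_diagonal]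
  set T : ℝ := ∑ i, (μ i)⁻¹ with hT
  have hTpos : 0 < T :=
    Finset.sum_pos (fun i _ => inv_pos.mpr (hμpos i)) Finset.univ_nonempty
  rw [htrQinv, htrS, htrQS]
  rw [inv_mul_le_iff₀ hTpos]
  have htrB : B.trace = ∑ i, B i i := rfl
  rw [htrB, Finset.mul_sum]
  refine Finset.sum_le_sum fun i _ => ?_
  have h1 : (μ i)⁻¹ ≤ T :=
    Finset.single_le_sum (fun j _ => (inv_pos.mpr (hμpos j)).le) (Finset.mem_univ i)
  have h2 : 0 ≤ μ i * B i i := mul_nonneg (hμpos i).le (psd_diag_nonneg hBpsd i)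
  calc B i i = (μ i)⁻¹ * (μ i * B i i) := by
        rw [← mul_assoc, inv_mul_cancel₀ (hμpos i).ne', one_mul]
    _ ≤ T * (μ i * B i i) := mul_le_mul_of_nonneg_right h1 h2
end

section
/- Let x̄ ≤ z_max be real numbers with z_max > 0, X ≥ 0, f ≥ 0, and α ∈ (0,1]. If x̄ ≤ (1 - 0.5α)·z_max - (X·f²)/(2α·z_max), then x̄ ≤ z_max - sqrt(X)·f. (The linearized tightened constraint implies the original square-root tightened constraint.) -/
theorem stmt_11 (xbar zmax X f α : ℝ)
    (hz : 0 < zmax) (hX : 0 ≤ X) (hf : 0 ≤ f) (hα1 : 0 < α) (hα2 : α ≤ 1)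
    (h : xbar ≤ (1 - 0.5 * α) * zmax - (X * f ^ 2) / (2 * α * zmax)) :
    xbar ≤ zmax - Real.sqrt X * f := by
  have hs : Real.sqrt X ^ 2 = X := Real.sq_sqrt hX
  have hs0 : 0 ≤ Real.sqrt X := Real.sqrt_nonneg X
  have hpos : 0 < 2 * α * zmax := by positivity
  have key : Real.sqrt X * f - 0.5 * α * zmax ≤ X * f ^ 2 / (2 * α * zmax) := by
    rw [le_div_iff₀ hpos]
    nlinarith [sq_nonneg (Real.sqrt X * f - α * zmax)]
  linarith
end

section
/- Let J: ℕ → ℝ satisfy J(t) ≥ α V(t) for all t, J(t) ≤ β V(t) + Nω whenever the state is in a terminal region, and J(t+1) ≤ J(t) - αV(t) + ω, where α, β, ω > 0, α ≤ β, N ∈ ℕ. If at time t the state is in the terminal region, then J(t+1) ≤ (1 - α/β)J(t) + ((α/β)N + 1)ω; consequently the sublevel set {J ≤ (1/η)(N + β/α)ω} is forward invariant for any η ∈ (0,1) provided the trajectory stays in the terminal region. -/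
theorem stmt_14 (J V : ℕ → ℝ) (Term : ℕ → Prop) (α β ω : ℝ) (N : ℕ)
    (hα : 0 < α) (hβ : 0 < β) (hω : 0 < ω) (hαβ : α ≤ β)
    (hV : ∀ t, 0 ≤ V t)
    (hlow : ∀ t, α * V t ≤ J t)
    (hup : ∀ t, Term t → J t ≤ β * V t + N * ω)
    (hdec : ∀ t, J (t + 1) ≤ J t - α * V t + ω) :
    (∀ t, Term t → J (t + 1) ≤ (1 - α / β) * J t + ((α / β) * N + 1) * ω) ∧
    (∀ η : ℝ, 0 < η → η < 1 → (∀ t, Term t) →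
      ∀ t, J t ≤ (1 / η) * (N + β / α) * ω →
        J (t + 1) ≤ (1 / η) * (N + β / α) * ω) := by
  have key : ∀ t, Term t → J (t + 1) ≤ (1 - α / β) * J t + ((α / β) * N + 1) * ω := by
    intro t ht
    have h1 := hup t ht
    have h2 := hdec t
    have hβ' : β ≠ 0 := ne_of_gt hβ
    have hVlb : (J t - N * ω) / β ≤ V t := by
      rw [div_le_iff₀ hβ]; linarith
    have : α * ((J t - N * ω) / β) ≤ α * V t :=
      mul_le_mul_of_nonneg_left hVlb hα.le
    have hdiv : α * ((J t - N * ω) / β) = (α / β) * J t - (α / β) * N * ω := by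
      field_simp
    rw [hdiv] at this
    linarith
  refine ⟨key, fun η hη hη1 hTerm t hJt => ?_⟩
  have hc := key t (hTerm t)
  set c := α / β with hc_def
  have hc0 : 0 < c := div_pos hα hβ
  have hc1 : c ≤ 1 := (div_le_one hβ).mpr hαβ
  set L := (1 / η) * (N + β / α) * ω with hL
  -- c * L = (1/η) * (c*N + 1) * ω
  have hcL : c * L = (1 / η) * (c * N + 1) * ω := by
    rw [hL, hc_def]
    field_simp
  have h1η : 1 ≤ 1 / η := (le_div_iff₀ hη).mpr (by linarith)
  have hstep : (c * N + 1) * ω ≤ c * L := by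
    rw [hcL]
    have hpos : 0 ≤ (c * N + 1) * ω :=
      mul_nonneg (by positivity) hω.le
    nlinarith
  have : (1 - c) * J t ≤ (1 - c) * L :=
    mul_le_mul_of_nonneg_left hJt (by linarith)
  linarith
end
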